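/- Let F be a field, n ≥ 2, T and S sets, k ≤ n, G = GL(n,F), and fix t_{1,s_1},...,t_{k,s_k} ∈ T with s_1,...,s_k ∈ S. Let (u^0_{i,s})_{s∈S, i=1,...,k} be any system of functions u^0_{i,s} : T → F such that the k×k matrix [u^0_{s_1}(t_{1,s_1}),...,u^0_{s_k}(t_{k,s_k})] equals the identity matrix I_k. Then there exists a family (u_s)_{s∈S} ∈ V(t_{1,s_1},...,t_{k,s_k}) such that ([u_{s_1}(t_{1,s_1}),...,u_{s_k}(t_{k,s_k})]_{1,2,...,k})^{-1} u_s(t)_{1,2,...,k} = u^0_s(t) for all t ∈ T and s ∈ S, and this family is unique up to G-equivalence. -/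

import Mathlib

open Matrix

/-- The `n × k` matrix whose columns are `u_{s_j}(t_{j,s_j})`, `j = 1, ..., k`. -/
def famColMat {F : Type*} [Field F] {T S : Type*} {n k : ℕ}
    (u : S → T → Fin n → F) (ss : Fin k → S) (ts : Fin k → T) :
    Matrix (Fin n) (Fin k) F :=
  Matrix.of fun i j => u (ss j) (ts j) i

/-- The rank of a family of maps `(u_s : T → Fⁿ)_{s ∈ S}`:
the dimension of `Span {u_s(t) : t ∈ T, s ∈ S}`. -/
noncomputable def famRank (F : Type*) [Field F] {T S : Type*} {n : ℕ}
    (u : S → T → Fin n → F) : ℕ :=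
  Module.finrank F (Submodule.span F (Set.range fun p : S × T => u p.1 p.2))

def stdFam {F : Type*} [Field F] {T S : Type*} (n : ℕ) {k : ℕ}
    (u0 : Fin k → S → T → F) : S → T → Fin n → F :=
  fun s t i => if h : (i : ℕ) < k then u0 ⟨i, h⟩ s t else 0

section lemmas
variable {F : Type*} [Field F] {T S : Type*} {n k : ℕ}

lemma stdFam_decomp (hk : k ≤ n) (u0 : Fin k → S → T → F) (s : S) (t : T) :
    stdFam n u0 s t = ∑ j, u0 j s t • (Pi.single (Fin.castLE hk j) 1 : Fin n → F) := by
  funext i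
  rw [Finset.sum_apply]
  simp only [Pi.smul_apply, Pi.single_apply, smul_eq_mul, mul_ite, mul_one, mul_zero]
  by_cases h : (i : ℕ) < k
  · rw [show stdFam n u0 s t i = u0 ⟨i, h⟩ s t from dif_pos h]
    rw [Finset.sum_eq_single (⟨(i : ℕ), h⟩ : Fin k)]
    · rw [if_pos (show i = Fin.castLE hk ⟨(i : ℕ), h⟩ from Fin.ext rfl)]
    · intro b _ hb
      rw [if_neg]
      intro e
      exact hb (Fin.ext (by simpa using (congrArg Fin.val e).symm))
    · simp
  · rw [show stdFam n u0 s t i = 0 from dif_neg h]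
    symm
    apply Finset.sum_eq_zero
    intro j _
    rw [if_neg]
    intro e
    exact h (e ▸ (by simpa using j.isLt))

lemma single_li (hk : k ≤ n) :
    LinearIndependent F (fun j : Fin k => (Pi.single (Fin.castLE hk j) 1 : Fin n → F)) := by
  have h := (Pi.basisFun F (Fin n)).linearIndependent.comp (Fin.castLE hk)
    (Fin.castLE_injective hk)
  have he : (fun j : Fin k => (Pi.single (Fin.castLE hk j) 1 : Fin n → F)) =
      (⇑(Pi.basisFun F (Fin n)) ∘ Fin.castLE hk) := by
    funext j; simp [Pi.basisFun_apply]
  rw [he]; exact h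

lemma stdFam_cols (hk : k ≤ n) (ss : Fin k → S) (ts : Fin k → T)
    (u0 : Fin k → S → T → F)
    (hI : (Matrix.of fun i j => u0 i (ss j) (ts j)) = (1 : Matrix (Fin k) (Fin k) F))
    (j : Fin k) :
    stdFam n u0 (ss j) (ts j) = (Pi.single (Fin.castLE hk j) 1 : Fin n → F) := by
  rw [stdFam_decomp hk]
  have hI' : ∀ i, u0 i (ss j) (ts j) = if i = j then (1 : F) else 0 := by
    intro i
    have := congrFun (congrFun hI i) j
    simpa [Matrix.one_apply] using this
  simp [hI', ite_smul]

end lemmas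

section lemmas2
variable {F : Type*} [Field F] {T S : Type*} {n k : ℕ}

lemma stdFam_submatrix (hk : k ≤ n) (ss : Fin k → S) (ts : Fin k → T)
    (u0 : Fin k → S → T → F) :
    (famColMat (stdFam n u0) ss ts).submatrix (Fin.castLE hk) id =
      Matrix.of fun i j => u0 i (ss j) (ts j) := by
  ext m j
  simp only [Matrix.submatrix_apply, famColMat, Matrix.of_apply, id_eq]
  show (if h : ((Fin.castLE hk m : Fin n) : ℕ) < k then
      u0 ⟨(Fin.castLE hk m : Fin n), h⟩ (ss j) (ts j) else 0) = u0 m (ss j) (ts j)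
  rw [dif_pos (show ((Fin.castLE hk m : Fin n) : ℕ) < k from by simpa using m.isLt)]
  congr 1

lemma finrank_span_single {F : Type*} [Field F] {n k : ℕ} (hk : k ≤ n) :
    Module.finrank F (Submodule.span F
      (Set.range fun j : Fin k => (Pi.single (Fin.castLE hk j) 1 : Fin n → F))) = k := by
  have hb := single_li (F := F) hk
  revert hb
  generalize (fun j : Fin k => (Pi.single (Fin.castLE hk j) 1 : Fin n → F)) = b
  intro hb
  exact (finrank_span_eq_card hb).trans (Fintype.card_fin k)

lemma stdFam_rank (hk : k ≤ n) (ss : Fin k → S) (ts : Fin k → T)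
    (u0 : Fin k → S → T → F)
    (hI : (Matrix.of fun i j => u0 i (ss j) (ts j)) = (1 : Matrix (Fin k) (Fin k) F)) :
    (famColMat (stdFam n u0) ss ts).rank = k := by
  rw [Matrix.rank_eq_finrank_span_cols]
  have hr : (famColMat (stdFam n u0) ss ts)ᵀ =
      fun j => (Pi.single (Fin.castLE hk j) 1 : Fin n → F) := by
    funext j
    exact stdFam_cols hk ss ts u0 hI j
  rw [show (famColMat (stdFam n u0) ss ts).col = _ from hr]
  exact finrank_span_single hk

lemma stdFam_famRank (hk : k ≤ n) (ss : Fin k → S) (ts : Fin k → T)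
    (u0 : Fin k → S → T → F)
    (hI : (Matrix.of fun i j => u0 i (ss j) (ts j)) = (1 : Matrix (Fin k) (Fin k) F)) :
    famRank F (stdFam n u0) = k := by
  unfold famRank
  have hs : Submodule.span F (Set.range fun p : S × T => stdFam n u0 p.1 p.2) =
      Submodule.span F (Set.range fun j : Fin k => (Pi.single (Fin.castLE hk j) 1 : Fin n → F)) := by
    apply le_antisymm
    · rw [Submodule.span_le]
      rintro x ⟨⟨s, t⟩, rfl⟩
      rw [SetLike.mem_coe, Submodule.mem_span_range_iff_exists_fun]
      exact ⟨fun j => u0 j s t, (stdFam_decomp hk u0 s t).symm⟩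
    · rw [Submodule.span_le]
      rintro x ⟨j, rfl⟩
      exact Submodule.subset_span ⟨(ss j, ts j), stdFam_cols hk ss ts u0 hI j⟩
  rw [hs]
  exact finrank_span_single hk

lemma stdFam_cond (hk : k ≤ n) (ss : Fin k → S) (ts : Fin k → T)
    (u0 : Fin k → S → T → F)
    (hI : (Matrix.of fun i j => u0 i (ss j) (ts j)) = (1 : Matrix (Fin k) (Fin k) F))
    (s : S) (t : T) :
    ((famColMat (stdFam n u0) ss ts).submatrix (Fin.castLE hk) id)⁻¹.mulVec
        (fun m => stdFam n u0 s t (Fin.castLE hk m)) = fun i => u0 i s t := by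
  rw [stdFam_submatrix hk ss ts u0, hI, inv_one]
  have : (fun m : Fin k => stdFam n u0 s t (Fin.castLE hk m)) = fun i => u0 i s t := by
    funext m
    show (if h : ((Fin.castLE hk m : Fin n) : ℕ) < k then
        u0 ⟨(Fin.castLE hk m : Fin n), h⟩ s t else 0) = u0 m s t
    rw [dif_pos (show ((Fin.castLE hk m : Fin n) : ℕ) < k from by simpa using m.isLt)]
    congr 1
  rw [this, Matrix.one_mulVec]

end lemmas2

section lemmas3
variable {F : Type*} [Field F] {T S : Type*} {n k : ℕ}

lemma aux_repr (hk : k ≤ n) (ss : Fin k → S) (ts : Fin k → T)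
    (u0 : Fin k → S → T → F)
    (hI : (Matrix.of fun i j => u0 i (ss j) (ts j)) = (1 : Matrix (Fin k) (Fin k) F))
    (u : S → T → Fin n → F)
    (h1 : famRank F u = k) (h2 : (famColMat u ss ts).rank = k)
    (h3 : ∀ s : S, ∀ t : T,
      ((famColMat u ss ts).submatrix (Fin.castLE hk) id)⁻¹.mulVec
        (fun m => u s t (Fin.castLE hk m)) = fun i => u0 i s t) :
    LinearIndependent F (fun j => u (ss j) (ts j)) ∧
      ∀ s : S, ∀ t : T, u s t = ∑ j, u0 j s t • u (ss j) (ts j) := by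
  set A := (famColMat u ss ts).submatrix (Fin.castLE hk) id with hA
  have hAinv : A⁻¹ * A = 1 := by
    ext i j
    have h := congrFun (h3 (ss j) (ts j)) i
    have hI' := congrFun (congrFun hI i) j
    have hmm : (A⁻¹ * A) i j =
        A⁻¹.mulVec (fun m => u (ss j) (ts j) (Fin.castLE hk m)) i := by
      simp [Matrix.mul_apply, Matrix.mulVec, dotProduct, hA, famColMat,
        Matrix.submatrix_apply]
    rw [hmm, h]
    simpa using hI'
  have hT : Set.range (famColMat u ss ts)ᵀ = Set.range (fun j => u (ss j) (ts j)) := rfl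
  rw [Matrix.rank_eq_finrank_span_cols, show Set.range (famColMat u ss ts).col = _ from hT] at h2
  have li : LinearIndependent F (fun j => u (ss j) (ts j)) := by
    rw [linearIndependent_iff_card_eq_finrank_span, Fintype.card_fin]
    exact h2.symm
  refine ⟨li, ?_⟩
  have hspan : Submodule.span F (Set.range fun j => u (ss j) (ts j)) =
      Submodule.span F (Set.range fun p : S × T => u p.1 p.2) := by
    apply Submodule.eq_of_le_of_finrank_eq
    · rw [Submodule.span_le]
      rintro x ⟨j, rfl⟩
      exact Submodule.subset_span ⟨(ss j, ts j), rfl⟩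
    · rw [h2]
      exact h1.symm
  intro s t
  have hmem : u s t ∈ Submodule.span F (Set.range fun j => u (ss j) (ts j)) := by
    rw [hspan]
    exact Submodule.subset_span ⟨(s, t), rfl⟩
  obtain ⟨c, hc⟩ := (Submodule.mem_span_range_iff_exists_fun F).mp hmem
  have hAc : A.mulVec c = fun m => u s t (Fin.castLE hk m) := by
    funext m
    have hcm := congrFun hc (Fin.castLE hk m)
    simp only [Finset.sum_apply, Pi.smul_apply, smul_eq_mul] at hcm
    simp only [Matrix.mulVec, dotProduct, hA, Matrix.submatrix_apply, famColMat,
      Matrix.of_apply, id_eq]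
    rw [← hcm]
    exact Finset.sum_congr rfl fun j _ => mul_comm _ _
  have hc' : c = fun i => u0 i s t := by
    have h := h3 s t
    rw [← hAc, Matrix.mulVec_mulVec, hAinv, Matrix.one_mulVec] at h
    exact h
  rw [← hc, hc']

lemma exists_equiv (hk : k ≤ n) {w w' : Fin k → Fin n → F}
    (hw : LinearIndependent F w) (hw' : LinearIndependent F w') :
    ∃ e : (Fin n → F) ≃ₗ[F] (Fin n → F), ∀ j, e (w j) = w' j := by
  set W := Submodule.span F (Set.range w) with hW
  set W' := Submodule.span F (Set.range w') with hW'
  obtain ⟨C, hC⟩ := Submodule.exists_isCompl W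
  obtain ⟨C', hC'⟩ := Submodule.exists_isCompl W'
  have hfr : Module.finrank F C = Module.finrank F C' := by
    have h1 := Submodule.finrank_add_eq_of_isCompl hC
    have h2 := Submodule.finrank_add_eq_of_isCompl hC'
    have h3 : Module.finrank F W = Module.finrank F W' := by
      rw [hW, hW', finrank_span_eq_card hw, finrank_span_eq_card hw']
    omega
  have e2 : C ≃ₗ[F] C' := LinearEquiv.ofFinrankEq _ _ hfr
  refine ⟨((Submodule.prodEquivOfIsCompl W C hC).symm.trans
    (((Module.Basis.span hw).equiv (Module.Basis.span hw') (Equiv.refl _)).prodCongr e2)).trans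
    (Submodule.prodEquivOfIsCompl W' C' hC'), fun j => ?_⟩
  have hmem : w j ∈ W := Submodule.subset_span ⟨j, rfl⟩
  have h1 : (Submodule.prodEquivOfIsCompl W C hC).symm (w j) = ((⟨w j, hmem⟩ : ↥W), 0) :=
    Submodule.prodEquivOfIsCompl_symm_apply_left W C hC (⟨w j, hmem⟩ : ↥W)
  have hb : (⟨w j, hmem⟩ : ↥W) = Module.Basis.span hw j := (Module.Basis.span_apply hw j).symm
  have hz : e2 0 = 0 := map_zero e2
  have h2 : (((Module.Basis.span hw).equiv (Module.Basis.span hw') (Equiv.refl _)).prodCongr e2)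
      ((⟨w j, hmem⟩ : ↥W), 0) = (Module.Basis.span hw' j, 0) := by
    rw [LinearEquiv.prodCongr_apply, hb, hz, Module.Basis.equiv_apply, Equiv.refl_apply]
  rw [LinearEquiv.trans_apply, LinearEquiv.trans_apply, h1, h2,
    Submodule.coe_prodEquivOfIsCompl']
  simp [Module.Basis.span_apply]

lemma exists_GL {m : ℕ} (e : (Fin m → F) ≃ₗ[F] (Fin m → F)) :
    ∃ g : GL (Fin m) F, ∀ x : Fin m → F,
      (g : Matrix (Fin m) (Fin m) F).mulVec x = e x := by
  have hco : (e : (Fin m → F) →ₗ[F] (Fin m → F)).comp (e.symm : (Fin m → F) →ₗ[F] _) =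
      LinearMap.id := by ext x; simp
  have hco' : (e.symm : (Fin m → F) →ₗ[F] (Fin m → F)).comp (e : (Fin m → F) →ₗ[F] _) =
      LinearMap.id := by ext x; simp
  refine ⟨⟨LinearMap.toMatrix' (e : (Fin m → F) →ₗ[F] _),
    LinearMap.toMatrix' (e.symm : (Fin m → F) →ₗ[F] _), ?_, ?_⟩, ?_⟩
  · rw [← LinearMap.toMatrix'_comp, hco, LinearMap.toMatrix'_id]
  · rw [← LinearMap.toMatrix'_comp, hco', LinearMap.toMatrix'_id]
  · intro x
    show (LinearMap.toMatrix' (e : (Fin m → F) →ₗ[F] _)).mulVec x = e x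
    rw [← Matrix.toLin'_apply, Matrix.toLin'_toMatrix']
    rfl

end lemmas3

/-- Theorem 5: given functions `u⁰_{i,s} : T → F` with
`[u⁰_{s_1}(t_{1,s_1}),...,u⁰_{s_k}(t_{k,s_k})] = I_k`, there exists a family
`(u_s) ∈ V(t_{1,s_1},...,t_{k,s_k})` such that
`([u_{s_1}(t_{1,s_1}),...]_{1,...,k})⁻¹ u_s(t)_{1,...,k} = u⁰_s(t)` for all `t, s`,
and any two such families are `GL(n,F)`-equivalent. -/
theorem families_exists_unique_up_to_GL_equivalence {F : Type*} [Field F] {T S : Type*}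
    {n k : ℕ} (hn : 2 ≤ n) (hk : k ≤ n) (ss : Fin k → S) (ts : Fin k → T)
    (u0 : Fin k → S → T → F)
    (hI : (Matrix.of fun i j => u0 i (ss j) (ts j)) = (1 : Matrix (Fin k) (Fin k) F)) :
    (∃ u : S → T → Fin n → F,
        famRank F u = k ∧ (famColMat u ss ts).rank = k ∧
        ∀ s : S, ∀ t : T,
          ((famColMat u ss ts).submatrix (Fin.castLE hk) id)⁻¹.mulVec
              (fun m => u s t (Fin.castLE hk m)) = fun i => u0 i s t) ∧
    (∀ u v : S → T → Fin n → F,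
        (famRank F u = k ∧ (famColMat u ss ts).rank = k ∧
          ∀ s : S, ∀ t : T,
            ((famColMat u ss ts).submatrix (Fin.castLE hk) id)⁻¹.mulVec
                (fun m => u s t (Fin.castLE hk m)) = fun i => u0 i s t) →
        (famRank F v = k ∧ (famColMat v ss ts).rank = k ∧
          ∀ s : S, ∀ t : T,
            ((famColMat v ss ts).submatrix (Fin.castLE hk) id)⁻¹.mulVec
                (fun m => v s t (Fin.castLE hk m)) = fun i => u0 i s t) →
        ∃ g : GL (Fin n) F, ∀ s : S, ∀ t : T,
          (g : Matrix (Fin n) (Fin n) F).mulVec (u s t) = v s t) := by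
  constructor
  · exact ⟨stdFam n u0, stdFam_famRank hk ss ts u0 hI, stdFam_rank hk ss ts u0 hI,
      stdFam_cond hk ss ts u0 hI⟩
  · rintro u v ⟨hu1, hu2, hu3⟩ ⟨hv1, hv2, hv3⟩
    obtain ⟨liu, repru⟩ := aux_repr hk ss ts u0 hI u hu1 hu2 hu3
    obtain ⟨liv, reprv⟩ := aux_repr hk ss ts u0 hI v hv1 hv2 hv3
    obtain ⟨e, he⟩ := exists_equiv hk liu liv
    obtain ⟨g, hg⟩ := exists_GL e
    refine ⟨g, fun s t => ?_⟩
    rw [hg, repru s t, map_sum]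
    simp only [_root_.map_smul, he]
    exact (reprv s t).symm
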